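/- For a mixed graph G = (V, E ∪ A) admitting a mixed edge cover, the minimum mix-size of a mixed edge cover is at least |V| minus the maximum mix-size of a matching forest; i.e., ρ(G) ≥ |V| − ν(G). -/

import Mathlib

variable {V : Type*} [Fintype V] [DecidableEq V]

/-- Number of elements of `FE` covering `v` (an edge covers both its endpoints). -/
def edgeCoverCount (FE : Finset (Sym2 V)) (v : V) : ℕ :=
  (FE.filter (fun e => v ∈ e)).card

/-- Number of arcs of `FA` with head `v`. -/
def arcCoverCount (FA : Finset (V × V)) (v : V) : ℕ :=
  (FA.filter (fun a => a.2 = v)).card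

/-- The multiset of undirected edges underlying the edge set `FE` and arc set `FA`. -/
def underlyingEdges (FE : Finset (Sym2 V)) (FA : Finset (V × V)) : Multiset (Sym2 V) :=
  FE.val + FA.val.map (fun a => s(a.1, a.2))

/-- A multiset of undirected edges is acyclic (a forest) iff every nonempty sub-multiset
touches strictly more vertices than its number of edges. -/
def AcyclicEdgeMultiset (M : Multiset (Sym2 V)) : Prop :=
  ∀ S : Multiset (Sym2 V), S ≤ M → S ≠ 0 →
    Multiset.card S < (Finset.univ.filter (fun v : V => ∃ e ∈ S.toFinset, v ∈ e)).card

/-- A matching forest: acyclic underlying undirected graph and every vertex covered at most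
once (endpoints of edges and heads of arcs count as covered). -/
def IsMatchingForest (FE : Finset (Sym2 V)) (FA : Finset (V × V)) : Prop :=
  AcyclicEdgeMultiset (underlyingEdges FE FA) ∧
    ∀ v : V, edgeCoverCount FE v + arcCoverCount FA v ≤ 1

/-- Reachability by a directed path (possibly of length 0) using arcs of `B`. -/
def arcReach (B : Finset (V × V)) : V → V → Prop :=
  Relation.ReflTransGen (fun u v => (u, v) ∈ B)

/-- A branching: each vertex has in-degree at most one and there is no directed cycle. -/
def IsBranching (B : Finset (V × V)) : Prop :=
  (∀ v : V, arcCoverCount B v ≤ 1) ∧ ∀ a ∈ B, ¬ arcReach B a.2 a.1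

/-- The root set of a branching: vertices with in-degree zero. -/
def rootSet (B : Finset (V × V)) : Finset V :=
  Finset.univ.filter (fun v => arcCoverCount B v = 0)

/-- A matching: every vertex is covered by at most one edge. -/
def IsMatching (FE : Finset (Sym2 V)) : Prop := ∀ v : V, edgeCoverCount FE v ≤ 1

/-- The set of vertices covered by some edge of `FE`. -/
def edgeCovered (FE : Finset (Sym2 V)) : Finset V :=
  Finset.univ.filter (fun v => 0 < edgeCoverCount FE v)

/-- A mixed edge cover: every vertex is reachable by a directed path (possibly trivial)
in the arc part from an endpoint of some edge of the edge part. -/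
def IsMixedEdgeCover (FE : Finset (Sym2 V)) (FA : Finset (V × V)) : Prop :=
  ∀ v : V, ∃ u : V, (∃ e ∈ FE, u ∈ e) ∧ arcReach FA u v

/-- A mixed covering forest: acyclic underlying undirected graph and every vertex covered
at least once. -/
def IsMixedCoveringForest (FE : Finset (Sym2 V)) (FA : Finset (V × V)) : Prop :=
  AcyclicEdgeMultiset (underlyingEdges FE FA) ∧
    ∀ v : V, 1 ≤ edgeCoverCount FE v + arcCoverCount FA v

/-- The mix-size ⟨F⟩ = |F ∩ E| + |F ∩ A| / 2. -/
def mixSize (FE : Finset (Sym2 V)) (FA : Finset (V × V)) : ℚ :=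
  (FE.card : ℚ) + (FA.card : ℚ) / 2

set_option linter.unusedSectionVars false
set_option maxHeartbeats 1000000

def reachN (B : Finset (V × V)) : ℕ → V → V → Prop
  | 0 => fun u v => u = v
  | n+1 => fun u v => ∃ w, reachN B n u w ∧ (w, v) ∈ B

lemma arcReach_reachN {B : Finset (V × V)} {u v : V} (h : arcReach B u v) :
    ∃ n, reachN B n u v := by
  induction h with
  | refl => exact ⟨0, rfl⟩
  | tail _ hbc ih => obtain ⟨n, hn⟩ := ih; exact ⟨n+1, _, hn, hbc⟩

lemma mem_edgeCovered {FE : Finset (Sym2 V)} {v : V} :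
    v ∈ edgeCovered FE ↔ ∃ e ∈ FE, v ∈ e := by
  simp [edgeCovered, edgeCoverCount, Finset.card_pos, Finset.filter_nonempty_iff]

lemma matching_empty : IsMatching (∅ : Finset (Sym2 V)) := by
  intro v; simp [edgeCoverCount]

lemma exists_matching_aux : ∀ (n : ℕ) (FE : Finset (Sym2 V)), FE.card ≤ n →
    ∃ ME, ME ⊆ FE ∧ IsMatching ME ∧ (edgeCovered FE).card ≤ FE.card + ME.card := by
  intro n
  induction n with
  | zero =>
    intro FE h
    rw [Nat.le_zero, Finset.card_eq_zero] at h
    subst h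
    exact ⟨∅, Finset.Subset.refl _, matching_empty, by simp [edgeCovered, edgeCoverCount]⟩
  | succ n ih =>
    intro FE hcard
    rcases FE.eq_empty_or_nonempty with rfl | ⟨e, he⟩
    · exact ⟨∅, Finset.Subset.refl _, matching_empty, by simp [edgeCovered, edgeCoverCount]⟩
    obtain ⟨⟨u, v⟩, rfl⟩ := e.exists_rep
    classical
    set FE' := FE.filter (fun f => u ∉ f ∧ v ∉ f) with hFE'
    have hsub : FE' ⊆ FE := Finset.filter_subset _ _
    have henot : s(u, v) ∉ FE' := by
      intro h
      exact (Finset.mem_filter.1 h).2.1 (Sym2.mem_mk_left u v)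
    have hlt : FE'.card < FE.card :=
      Finset.card_lt_card ((Finset.ssubset_iff_of_subset hsub).2 ⟨s(u, v), he, henot⟩)
    have hcard' : FE'.card ≤ n := by omega
    obtain ⟨ME', hME'sub, hME'match, hME'card⟩ := ih FE' hcard'
    refine ⟨insert s(u, v) ME', ?_, ?_, ?_⟩
    · exact Finset.insert_subset he (hME'sub.trans hsub)
    · intro w
      unfold edgeCoverCount
      rw [Finset.filter_insert]
      by_cases hw : w ∈ s(u, v)
      · rw [if_pos hw]
        have hempty : ME'.filter (fun f => w ∈ f) = ∅ := by
          rw [Finset.filter_eq_empty_iff]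
          intro f hf
          have := hME'sub hf
          rw [hFE', Finset.mem_filter] at this
          rcases Sym2.mem_iff.1 hw with rfl | rfl
          · exact this.2.1
          · exact this.2.2
        rw [hempty]
        simp
      · rw [if_neg hw]; exact hME'match w
    · -- counting
      have heinME' : s(u, v) ∉ ME' := fun h => henot (hME'sub h)
      rw [Finset.card_insert_of_notMem heinME']
      set D := FE \ FE' with hD
      have hDcard : FE.card = FE'.card + D.card := by
        rw [hD, Finset.card_sdiff_of_subset hsub]; omega
      have heD : s(u,v) ∈ D := Finset.mem_sdiff.2 ⟨he, henot⟩
      -- injection from T into D.erase e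
      set T := edgeCovered FE \ (insert u (insert v (edgeCovered FE'))) with hT
      have hpick : ∀ w : V, ∃ f, w ∈ T → f ∈ FE ∧ w ∈ f := by
        intro w
        by_cases hw : w ∈ T
        · have := (Finset.mem_sdiff.1 hw).1
          obtain ⟨f, hf1, hf2⟩ := mem_edgeCovered.1 this
          exact ⟨f, fun _ => ⟨hf1, hf2⟩⟩
        · exact ⟨s(u,v), fun h => absurd h hw⟩
      choose φ hφ using hpick
      have hTcard : T.card ≤ (D.erase s(u,v)).card := by
        apply Finset.card_le_card_of_injOn φ
        · intro w hw
          obtain ⟨hf1, hf2⟩ := hφ w hw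
          have hwT := Finset.mem_sdiff.1 hw
          have hwnot : w ≠ u ∧ w ≠ v ∧ w ∉ edgeCovered FE' := by
            have := hwT.2
            simp only [Finset.mem_insert] at this
            push_neg at this
            exact this
          rw [Finset.mem_coe, Finset.mem_erase, hD, Finset.mem_sdiff]
          refine ⟨?_, hf1, ?_⟩
          · intro heqe
            rw [heqe] at hf2
            rcases Sym2.mem_iff.1 hf2 with rfl | rfl
            · exact hwnot.1 rfl
            · exact hwnot.2.1 rfl
          · intro hfFE'
            exact hwnot.2.2 (mem_edgeCovered.2 ⟨φ w, hfFE', hf2⟩)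
        · intro w1 hw1' w2 hw2' heq
          have hw1 : w1 ∈ T := hw1'
          have hw2 : w2 ∈ T := hw2'
          obtain ⟨hf11, hf12⟩ := hφ w1 hw1
          obtain ⟨hf21, hf22⟩ := hφ w2 hw2
          rw [heq] at hf12
          have hnotmem : ∀ w, w ∈ T → w ≠ u ∧ w ≠ v ∧ w ∉ edgeCovered FE' := by
            intro w hw
            have := (Finset.mem_sdiff.1 hw).2
            simp only [Finset.mem_insert] at this
            push_neg at this
            exact this
          have h1 := hnotmem w1 hw1
          have h2 := hnotmem w2 hw2
          have hnotFE' : φ w2 ∉ FE' := fun hfFE' =>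
            h2.2.2 (mem_edgeCovered.2 ⟨φ w2, hfFE', hf22⟩)
          have huv : u ∈ φ w2 ∨ v ∈ φ w2 := by
            by_contra hc
            push_neg at hc
            exact hnotFE' (Finset.mem_filter.2 ⟨hf21, hc.1, hc.2⟩)
          obtain ⟨⟨a, b⟩, hab⟩ := (φ w2).exists_rep
          simp only [← hab, Sym2.mem_iff] at hf12 hf22 huv
          obtain ⟨h1u, h1v, -⟩ := h1
          obtain ⟨h2u, h2v, -⟩ := h2
          rcases huv with huv | huv <;> rcases huv with h | h <;>
            rcases hf12 with h12 | h12 <;> rcases hf22 with h22 | h22 <;> grind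
      -- now the cardinality chain
      have hcov_sub : edgeCovered FE ⊆ T ∪ insert u (insert v (edgeCovered FE')) := by
        intro w hw
        rw [Finset.mem_union]
        by_cases h : w ∈ insert u (insert v (edgeCovered FE'))
        · exact Or.inr h
        · exact Or.inl (Finset.mem_sdiff.2 ⟨hw, h⟩)
      have h1 : (edgeCovered FE).card ≤ T.card + ((edgeCovered FE').card + 2) := by
        calc (edgeCovered FE).card ≤ (T ∪ insert u (insert v (edgeCovered FE'))).card :=
              Finset.card_le_card hcov_sub
          _ ≤ T.card + (insert u (insert v (edgeCovered FE'))).card := Finset.card_union_le _ _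
          _ ≤ T.card + ((edgeCovered FE').card + 2) := by
              have := Finset.card_insert_le u (insert v (edgeCovered FE'))
              have := Finset.card_insert_le v (edgeCovered FE')
              omega
      have h2 : (D.erase s(u,v)).card = D.card - 1 := Finset.card_erase_of_mem heD
      have hD1 : 1 ≤ D.card := Finset.card_pos.2 ⟨_, heD⟩
      omega
theorem min_mec_ge_card_sub_max_mf
    (E : Finset (Sym2 V)) (A : Finset (V × V))
    (hE : ∀ e ∈ E, ¬ e.IsDiag) (hA : ∀ a ∈ A, a.1 ≠ a.2)
    (hcov : ∃ FE FA, FE ⊆ E ∧ FA ⊆ A ∧ IsMixedEdgeCover FE FA)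
    (ν ρ : ℚ)
    (hν : IsGreatest {q : ℚ | ∃ FE FA, FE ⊆ E ∧ FA ⊆ A ∧ IsMatchingForest FE FA ∧
      q = mixSize FE FA} ν)
    (hρ : IsLeast {q : ℚ | ∃ FE FA, FE ⊆ E ∧ FA ⊆ A ∧ IsMixedEdgeCover FE FA ∧
      q = mixSize FE FA} ρ) :
    (Fintype.card V : ℚ) - ν ≤ ρ := by
  classical
  obtain ⟨FE, FA, hFEE, hFAA, hcovF, hρeq⟩ := hρ.1
  set P : V → Prop := fun v => ∃ e ∈ FE, v ∈ e with hP
  have hEx : ∀ v : V, ∃ n, ∃ u, P u ∧ reachN FA n u v := by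
    intro v
    obtain ⟨u, hu, hr⟩ := hcovF v
    obtain ⟨n, hn⟩ := arcReach_reachN hr
    exact ⟨n, u, hu, hn⟩
  set h : V → ℕ := fun v => Nat.find (hEx v) with hh
  have hspec : ∀ v, ∃ u, P u ∧ reachN FA (h v) u v := fun v => Nat.find_spec (hEx v)
  have h_end_of_zero : ∀ v, h v = 0 → P v := by
    intro v hv
    obtain ⟨u, hu, hr⟩ := hspec v
    rw [hv] at hr
    exact hr ▸ hu
  have hkey : ∀ v, ¬ P v → ∃ x, (x, v) ∈ FA ∧ h x < h v := by
    intro v hv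
    have hne : h v ≠ 0 := fun h0 => hv (h_end_of_zero v h0)
    obtain ⟨m, hm⟩ := Nat.exists_eq_succ_of_ne_zero hne
    obtain ⟨u, hu, hr⟩ := hspec v
    rw [hm] at hr
    obtain ⟨x, hx1, hx2⟩ := hr
    refine ⟨x, hx2, ?_⟩
    have hle : h x ≤ m := Nat.find_le ⟨u, hu, hx1⟩
    omega
  have hchoice : ∀ v, ∃ x, ¬ P v → ((x, v) ∈ FA ∧ h x < h v) := by
    intro v
    by_cases hv : P v
    · exact ⟨v, fun hc => absurd hv hc⟩
    · obtain ⟨x, hx⟩ := hkey v hv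
      exact ⟨x, fun _ => hx⟩
  choose tl htl using hchoice
  set N : Finset V := Finset.univ.filter (fun v => ¬ P v) with hNdef
  set R : Finset V := Finset.univ.filter P with hRdef
  have hRN : R.card + N.card = Fintype.card V := by
    rw [hRdef, hNdef, Finset.card_filter_add_card_filter_not, Finset.card_univ]
  set FA' : Finset (V × V) := N.image (fun v => (tl v, v)) with hFA'def
  have hmemFA' : ∀ a ∈ FA', ¬ P a.2 ∧ a.1 = tl a.2 ∧ a ∈ FA ∧ h a.1 < h a.2 := by
    intro a ha
    rw [hFA'def, Finset.mem_image] at ha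
    obtain ⟨v, hvN, rfl⟩ := ha
    have hv : ¬ P v := (Finset.mem_filter.1 hvN).2
    obtain ⟨h1, h2⟩ := htl v hv
    exact ⟨hv, rfl, h1, h2⟩
  have hFA'sub : FA' ⊆ FA := fun a ha => (hmemFA' a ha).2.2.1
  have hFA'card : FA'.card = N.card := by
    rw [hFA'def]
    exact Finset.card_image_of_injective N (fun a b hab => (Prod.ext_iff.1 hab).2)
  have hacc1 : ∀ v, ¬ P v → arcCoverCount FA' v = 1 := by
    intro v hv
    have hfil : FA'.filter (fun a => a.2 = v) = {(tl v, v)} := by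
      ext a
      simp only [Finset.mem_filter, Finset.mem_singleton]
      constructor
      · rintro ⟨ha, h2⟩
        obtain ⟨-, hfst, -, -⟩ := hmemFA' a ha
        obtain ⟨x, y⟩ := a
        simp only at hfst h2
        subst h2
        rw [hfst]
      · rintro rfl
        refine ⟨?_, rfl⟩
        rw [hFA'def, Finset.mem_image]
        exact ⟨v, Finset.mem_filter.2 ⟨Finset.mem_univ v, hv⟩, rfl⟩
    rw [arcCoverCount, hfil, Finset.card_singleton]
  have hacc0 : ∀ v, P v → arcCoverCount FA' v = 0 := by
    intro v hv
    rw [arcCoverCount, Finset.card_eq_zero, Finset.filter_eq_empty_iff]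
    intro a ha h2
    exact (hmemFA' a ha).1 (h2 ▸ hv)
  obtain ⟨ME, hMEsub, hMEmatch, hMEcard⟩ := exists_matching_aux FE.card FE le_rfl
  have hcovR : edgeCovered FE = R := by
    ext v
    rw [mem_edgeCovered, hRdef, Finset.mem_filter]
    exact ⟨fun hp => ⟨Finset.mem_univ v, hp⟩, fun hp => hp.2⟩
  have hMEend : ∀ x ∈ ME, ∀ c ∈ x, P c := fun x hx c hc => ⟨x, hMEsub hx, hc⟩
  -- argmax choice function
  have hargmax : ∀ x : Sym2 V, ∃ c, c ∈ x ∧ ∀ d ∈ x, h d ≤ h c := by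
    intro x
    obtain ⟨⟨a, b⟩, rfl⟩ := x.exists_rep
    rcases le_total (h a) (h b) with hab | hab
    · refine ⟨b, Sym2.mem_mk_right a b, ?_⟩
      intro d hd
      rcases Sym2.mem_iff.1 hd with rfl | rfl
      · exact hab
      · exact le_rfl
    · refine ⟨a, Sym2.mem_mk_left a b, ?_⟩
      intro d hd
      rcases Sym2.mem_iff.1 hd with rfl | rfl
      · exact le_rfl
      · exact hab
  choose ψ hψmem hψmax using hargmax
  have hψarc : ∀ a ∈ FA', ψ (s(a.1, a.2)) = a.2 := by
    intro a ha
    have hlt := (hmemFA' a ha).2.2.2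
    rcases Sym2.mem_iff.1 (hψmem s(a.1, a.2)) with h1 | h1
    · exfalso
      have h2 := hψmax s(a.1, a.2) a.2 (Sym2.mem_mk_right _ _)
      rw [h1] at h2
      omega
    · exact h1
  have hMnodup : (underlyingEdges ME FA').Nodup := by
    rw [underlyingEdges, Multiset.nodup_add]
    refine ⟨ME.nodup, ?_, ?_⟩
    · refine Multiset.Nodup.map_on ?_ FA'.nodup
      intro a ha b hb hab
      have ha' : a ∈ FA' := ha
      have hb' : b ∈ FA' := hb
      have h2 : a.2 = b.2 := by rw [← hψarc a ha', hab, hψarc b hb']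
      have h1 : a.1 = b.1 := by
        rw [(hmemFA' a ha').2.1, (hmemFA' b hb').2.1, h2]
      exact Prod.ext h1 h2
    · rw [Multiset.disjoint_left]
      intro x hx1 hx2
      rw [Multiset.mem_map] at hx2
      obtain ⟨a, ha, rfl⟩ := hx2
      have ha' : a ∈ FA' := ha
      exact (hmemFA' a ha').1
        (hMEend _ hx1 a.2 (Sym2.mem_mk_right _ _))
  have hacyc : AcyclicEdgeMultiset (underlyingEdges ME FA') := by
    intro S hS hS0
    have hSnodup : S.Nodup := Multiset.nodup_of_le hS hMnodup
    have hScard : Multiset.card S = S.toFinset.card :=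
      (Multiset.toFinset_card_of_nodup hSnodup).symm
    have hmemM : ∀ x ∈ S.toFinset, x ∈ ME ∨ ∃ a ∈ FA', x = s(a.1, a.2) := by
      intro x hx
      have hxM : x ∈ underlyingEdges ME FA' :=
        Multiset.mem_of_le hS (Multiset.mem_toFinset.1 hx)
      rw [underlyingEdges, Multiset.mem_add] at hxM
      rcases hxM with hxM | hxM
      · exact Or.inl hxM
      · rw [Multiset.mem_map] at hxM
        obtain ⟨a, ha, hax⟩ := hxM
        exact Or.inr ⟨a, ha, hax.symm⟩
    set T : Finset V := Finset.univ.filter (fun v : V => ∃ e ∈ S.toFinset, v ∈ e) with hTdef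
    have hmemT : ∀ x ∈ S.toFinset, ∀ c ∈ x, c ∈ T := by
      intro x hx c hc
      rw [hTdef, Finset.mem_filter]
      exact ⟨Finset.mem_univ c, x, hx, hc⟩
    -- injectivity of ψ on S.toFinset
    have hinj : Set.InjOn ψ ↑S.toFinset := by
      intro x1 hx1' x2 hx2' heq
      have hx1 : x1 ∈ S.toFinset := hx1'
      have hx2 : x2 ∈ S.toFinset := hx2'
      rcases hmemM x1 hx1 with he1 | ⟨a1, ha1, rfl⟩ <;>
        rcases hmemM x2 hx2 with he2 | ⟨a2, ha2, rfl⟩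
      · by_contra hne
        have hc1 : ψ x2 ∈ x1 := heq ▸ hψmem x1
        have hc2 : ψ x2 ∈ x2 := hψmem x2
        have hsub2 : ({x1, x2} : Finset (Sym2 V)) ⊆ ME.filter (fun f => ψ x2 ∈ f) := by
          intro y hy
          rcases Finset.mem_insert.1 hy with rfl | hy
          · exact Finset.mem_filter.2 ⟨he1, hc1⟩
          · rw [Finset.mem_singleton.1 hy]
            exact Finset.mem_filter.2 ⟨he2, hc2⟩
        have h2le := Finset.card_le_card hsub2
        rw [Finset.card_pair hne] at h2le
        have hm := hMEmatch (ψ x2)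
        rw [edgeCoverCount] at hm
        omega
      · exfalso
        have hPψ : P (ψ x1) := hMEend x1 he1 _ (hψmem x1)
        rw [heq, hψarc a2 ha2] at hPψ
        exact (hmemFA' a2 ha2).1 hPψ
      · exfalso
        have hPψ : P (ψ x2) := hMEend x2 he2 _ (hψmem x2)
        rw [← heq, hψarc a1 ha1] at hPψ
        exact (hmemFA' a1 ha1).1 hPψ
      · have h22 : a1.2 = a2.2 := by rw [← hψarc a1 ha1, heq, hψarc a2 ha2]
        have h11 : a1.1 = a2.1 := by
          rw [(hmemFA' a1 ha1).2.1, (hmemFA' a2 ha2).2.1, h22]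
        rw [Prod.ext h11 h22]
    -- find an unhit vertex c
    have hunhit : ∃ c ∈ T, ∀ y ∈ S.toFinset, ψ y ≠ c := by
      by_cases hedge : ∃ x ∈ S.toFinset, x ∈ ME
      · obtain ⟨x0, hx0S, hx0ME⟩ := hedge
        obtain ⟨⟨u0, v0⟩, rfl⟩ := x0.exists_rep
        have hndiag : ¬ (s(u0, v0) : Sym2 V).IsDiag := hE _ (hFEE (hMEsub hx0ME))
        have hne : u0 ≠ v0 := fun hc => hndiag (Sym2.mk_isDiag_iff.2 hc)
        have hcex : ∃ c, c ∈ (s(u0, v0) : Sym2 V) ∧ c ≠ ψ s(u0, v0) := by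
          rcases Sym2.mem_iff.1 (hψmem s(u0, v0)) with h0 | h0
          · exact ⟨v0, Sym2.mem_mk_right _ _, by rw [h0]; exact hne.symm⟩
          · exact ⟨u0, Sym2.mem_mk_left _ _, by rw [h0]; exact hne⟩
        obtain ⟨c, hcmem, hcne⟩ := hcex
        refine ⟨c, hmemT _ hx0S c hcmem, ?_⟩
        intro y hy hψy
        rcases hmemM y hy with hyME | ⟨a, ha, rfl⟩
        · by_cases hyx : y = s(u0, v0)
          · exact hcne (hyx ▸ hψy).symm
          · -- matching violated at c
            have hc1 : c ∈ y := hψy ▸ hψmem y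
            have hsub2 : ({y, s(u0, v0)} : Finset (Sym2 V)) ⊆
                ME.filter (fun f => c ∈ f) := by
              intro z hz
              rcases Finset.mem_insert.1 hz with rfl | hz
              · exact Finset.mem_filter.2 ⟨hyME, hc1⟩
              · rw [Finset.mem_singleton.1 hz]
                exact Finset.mem_filter.2 ⟨hx0ME, hcmem⟩
            have h2le := Finset.card_le_card hsub2
            rw [Finset.card_pair hyx] at h2le
            have hm := hMEmatch c
            rw [edgeCoverCount] at hm
            omega
        · have : P c := hMEend _ hx0ME c hcmem
          rw [← hψy, hψarc a ha] at this
          exact (hmemFA' a ha).1 this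
      · push_neg at hedge
        obtain ⟨x0, hx0⟩ := Multiset.exists_mem_of_ne_zero hS0
        have hx0F : x0 ∈ S.toFinset := Multiset.mem_toFinset.2 hx0
        have hTne : T.Nonempty := by
          obtain ⟨⟨p, q⟩, rfl⟩ := x0.exists_rep
          exact ⟨p, hmemT _ hx0F p (Sym2.mem_mk_left _ _)⟩
        obtain ⟨c, hcT, hcmin⟩ := Finset.exists_min_image T h hTne
        refine ⟨c, hcT, ?_⟩
        intro y hy hψy
        rcases hmemM y hy with hyME | ⟨a, ha, rfl⟩
        · exact hedge y hy hyME
        · have hlt := (hmemFA' a ha).2.2.2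
          have h1T : a.1 ∈ T := hmemT _ hy a.1 (Sym2.mem_mk_left _ _)
          have := hcmin a.1 h1T
          rw [hψarc a ha] at hψy
          rw [hψy] at hlt
          omega
    obtain ⟨c, hcT, hcnot⟩ := hunhit
    have himg : S.toFinset.image ψ ⊆ T.erase c := by
      intro z hz
      rw [Finset.mem_image] at hz
      obtain ⟨x, hx, rfl⟩ := hz
      exact Finset.mem_erase.2 ⟨hcnot x hx, hmemT x hx _ (hψmem x)⟩
    have h1 : (S.toFinset.image ψ).card = S.toFinset.card :=
      Finset.card_image_of_injOn hinj
    have h2 := Finset.card_le_card himg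
    have h3 : (T.erase c).card = T.card - 1 := Finset.card_erase_of_mem hcT
    have h4 : 1 ≤ T.card := Finset.card_pos.2 ⟨c, hcT⟩
    rw [hScard]
    omega
  -- matching forest
  have hmf : IsMatchingForest ME FA' := by
    refine ⟨hacyc, fun v => ?_⟩
    by_cases hv : P v
    · rw [hacc0 v hv]
      have := hMEmatch v
      omega
    · have hzero : edgeCoverCount ME v = 0 := by
        rw [edgeCoverCount, Finset.card_eq_zero, Finset.filter_eq_empty_iff]
        intro f hf hvf
        exact hv ⟨f, hMEsub hf, hvf⟩
      rw [hzero, hacc1 v hv]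
  have hν2 : mixSize ME FA' ≤ ν :=
    hν.2 ⟨ME, FA', hMEsub.trans hFEE, hFA'sub.trans hFAA, hmf, rfl⟩
  rw [mixSize, hFA'card] at hν2
  have e1 : (R.card : ℚ) ≤ (FE.card : ℚ) + ME.card := by
    rw [← hcovR]; exact_mod_cast hMEcard
  have e2 : (N.card : ℚ) ≤ (FA.card : ℚ) := by
    rw [← hFA'card]; exact_mod_cast Finset.card_le_card hFA'sub
  have e3 : (R.card : ℚ) + N.card = Fintype.card V := by exact_mod_cast hRN
  rw [hρeq, mixSize]
  linarith
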